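/- Let f : J → ℂ be continuous on an interval J ⊆ ℝ. The continuous functional calculus map A ↦ f(A), defined on the set of bounded self-adjoint operators A on a Hilbert space with σ(A) ⊆ J, is continuous with respect to the operator norm. -/

import Mathlib

open Polynomial in
lemma aux_spec_perturb {A : Type*} [CStarAlgebra A]
    {a b : A} (hb : IsSelfAdjoint b) {x : ℝ} (hx : x ∈ spectrum ℝ a) :
    ∃ μ ∈ spectrum ℝ b, |x - μ| ≤ ‖a - b‖ := by
  by_contra hcon
  push_neg at hcon
  have hnt : Nontrivial A := by
    by_contra h
    rw [not_nontrivial_iff_subsingleton] at h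
    exact spectrum.mem_iff.mp hx (isUnit_of_subsingleton _)
  have hneC : (spectrum ℂ b).Nonempty := spectrum.nonempty b
  have himg : Complex.reCLM '' spectrum ℂ b = spectrum ℝ b := hb.spectrumRestricts.image
  have hne : (spectrum ℝ b).Nonempty := himg ▸ hneC.image _
  have hcpt : IsCompact (spectrum ℝ b) := spectrum.isCompact b
  obtain ⟨μ₀, hμ₀, hmin⟩ := hcpt.exists_isMinOn hne
    ((continuous_const.sub continuous_id).abs.continuousOn : ContinuousOn (fun μ => |x - μ|) _)
  set d := |x - μ₀| with hd_def
  have hd : ‖a - b‖ < d := hcon μ₀ hμ₀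
  have hd0 : 0 < d := lt_of_le_of_lt (norm_nonneg _) hd
  have hne0 : ∀ t ∈ spectrum ℝ b, x - t ≠ 0 := fun t ht => by
    have := lt_of_lt_of_le hd0 (hmin ht)
    exact fun h => by simp [h] at this
  set g : ℝ → ℝ := fun t => (x - t)⁻¹ with hg_def
  have hg : ContinuousOn g (spectrum ℝ b) :=
    (continuous_const.sub continuous_id).continuousOn.inv₀ hne0
  set u := cfc g b with hu_def
  have hxb : cfc (fun t : ℝ => x - t) b = algebraMap ℝ A x - b := by
    rw [cfc_sub _ _ b, cfc_const x b, cfc_id' ℝ b]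
  have h1 : u * (algebraMap ℝ A x - b) = 1 := by
    rw [← hxb, ← cfc_mul _ _ b hg (by fun_prop), ← cfc_one ℝ b]
    exact cfc_congr fun t ht => inv_mul_cancel₀ (hne0 t ht)
  have h2 : (algebraMap ℝ A x - b) * u = 1 := by
    rw [← hxb, ← cfc_mul _ _ b (by fun_prop) hg, ← cfc_one ℝ b]
    exact cfc_congr fun t ht => mul_inv_cancel₀ (hne0 t ht)
  have hu_isUnit : IsUnit (algebraMap ℝ A x - b) := ⟨⟨_, u, h2, h1⟩, rfl⟩
  have hu_norm : ‖u‖ ≤ d⁻¹ := by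
    refine norm_cfc_le (by positivity) fun t ht => ?_
    rw [Real.norm_eq_abs, hg_def, abs_inv]
    exact inv_anti₀ hd0 (hmin ht)
  have hsmall : ‖u * (a - b)‖ < 1 := by
    calc ‖u * (a - b)‖ ≤ ‖u‖ * ‖a - b‖ := norm_mul_le _ _
      _ ≤ d⁻¹ * ‖a - b‖ := mul_le_mul_of_nonneg_right hu_norm (norm_nonneg _)
      _ < d⁻¹ * d := by exact mul_lt_mul_of_pos_left hd (by positivity)
      _ = 1 := inv_mul_cancel₀ (ne_of_gt hd0)
  have key : algebraMap ℝ A x - a = (algebraMap ℝ A x - b) * (1 - u * (a - b)) := by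
    rw [mul_sub, mul_one, ← mul_assoc, h2, one_mul, sub_sub_sub_cancel_right]
  exact spectrum.mem_iff.mp hx (key ▸ hu_isUnit.mul (isUnit_one_sub_of_norm_lt_one hsmall))

/-- For a continuous `f` on an interval (convex subset) `J ⊆ ℝ`, the
continuous functional calculus `A ↦ f(A)`, defined on the set of bounded self-adjoint
operators on a complex Hilbert space with spectrum contained in `J`, is continuous in the
operator norm (in the subspace topology). -/
theorem cfc_continuousOn_selfAdjoint_spectrum_subset
    {H : Type*} [NormedAddCommGroup H] [InnerProductSpace ℂ H] [CompleteSpace H]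
    (J : Set ℝ) (hJ : Convex ℝ J) (hJne : J.Nonempty)
    (f : ℂ → ℂ) (hf : ContinuousOn f (Complex.ofReal '' J)) :
    ContinuousOn (fun A : H →L[ℂ] H => cfc f A)
      {A : H →L[ℂ] H | IsSelfAdjoint A ∧ spectrum ℂ A ⊆ Complex.ofReal '' J} := by
  classical
  rcases subsingleton_or_nontrivial (H →L[ℂ] H) with hsub | hnt
  · have : (fun A : H →L[ℂ] H => cfc f A) = fun _ => cfc f (0 : H →L[ℂ] H) :=
      funext fun A => by rw [Subsingleton.elim A 0]
    rw [this]; exact continuousOn_const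
  intro A₀ hA₀mem
  obtain ⟨hA₀sa, hA₀spec⟩ := hA₀mem
  have halg : ∀ t : ℝ, algebraMap ℝ ℂ t = Complex.ofReal t := fun _ => rfl
  -- real spectrum facts
  have hspecR : ∀ (A : H →L[ℂ] H), IsSelfAdjoint A →
      spectrum ℂ A ⊆ Complex.ofReal '' J → spectrum ℝ A ⊆ J := by
    intro A hAsa hAspec x hx
    have hxC : (x : ℂ) ∈ spectrum ℂ A := by
      rw [← hAsa.spectrumRestricts.algebraMap_image]
      exact ⟨x, hx, rfl⟩
    obtain ⟨y, hy, hxy⟩ := hAspec hxC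
    rwa [show y = x from Complex.ofReal_inj.mp hxy] at hy
  have hA₀r : spectrum ℝ A₀ ⊆ J := hspecR A₀ hA₀sa hA₀spec
  have hcpt : IsCompact (spectrum ℝ A₀) := spectrum.isCompact A₀
  have hneC : (spectrum ℂ A₀).Nonempty := spectrum.nonempty A₀
  have himg : Complex.reCLM '' spectrum ℂ A₀ = spectrum ℝ A₀ := hA₀sa.spectrumRestricts.image
  have hne : (spectrum ℝ A₀).Nonempty := himg ▸ hneC.image _
  set m := sInf (spectrum ℝ A₀) with hm_def
  set M := sSup (spectrum ℝ A₀) with hM_def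
  have hm : m ∈ spectrum ℝ A₀ := hcpt.sInf_mem hne
  have hM : M ∈ spectrum ℝ A₀ := hcpt.sSup_mem hne
  have hmem_mM : ∀ μ ∈ spectrum ℝ A₀, m ≤ μ ∧ μ ≤ M := fun μ hμ =>
    ⟨csInf_le hcpt.bddBelow hμ, le_csSup hcpt.bddAbove hμ⟩
  -- choice of compact interval [a', b'] ⊆ J absorbing perturbed spectra
  obtain ⟨a', ha'J, ha'm, δl, hδl, hδlprop⟩ :
      ∃ a' ∈ J, a' ≤ m ∧ ∃ δl > 0, ∀ t ∈ J, m - δl ≤ t → a' ≤ t := by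
    by_cases hlow : ∃ y ∈ J, y < m
    · obtain ⟨y, hyJ, hym⟩ := hlow
      exact ⟨y, hyJ, hym.le, m - y, by linarith, fun t _ ht => by linarith⟩
    · push_neg at hlow
      exact ⟨m, hA₀r hm, le_refl _, 1, one_pos, fun t htJ _ => hlow t htJ⟩
  obtain ⟨b', hb'J, hb'M, δr, hδr, hδrprop⟩ :
      ∃ b' ∈ J, M ≤ b' ∧ ∃ δr > 0, ∀ t ∈ J, t ≤ M + δr → t ≤ b' := by
    by_cases hhigh : ∃ z ∈ J, M < z
    · obtain ⟨z, hzJ, hMz⟩ := hhigh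
      exact ⟨z, hzJ, hMz.le, z - M, by linarith, fun t _ ht => by linarith⟩
    · push_neg at hhigh
      exact ⟨M, hA₀r hM, le_refl _, 1, one_pos, fun t htJ _ => hhigh t htJ⟩
  set δ₀ := min δl δr with hδ₀_def
  have hδ₀ : 0 < δ₀ := lt_min hδl hδr
  have hKJ : Set.Icc a' b' ⊆ J := hJ.ordConnected.out ha'J hb'J
  -- perturbed spectra stay in [a', b']
  have hspec_in : ∀ A : H →L[ℂ] H, IsSelfAdjoint A → spectrum ℂ A ⊆ Complex.ofReal '' J →
      ‖A - A₀‖ < δ₀ → spectrum ℝ A ⊆ Set.Icc a' b' := by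
    intro A hAsa hAspec hdist x hx
    obtain ⟨μ, hμ, hxμ⟩ := aux_spec_perturb hA₀sa hx
    obtain ⟨hmμ, hμM⟩ := hmem_mM μ hμ
    rw [abs_le] at hxμ
    have hxJ : x ∈ J := hspecR A hAsa hAspec hx
    constructor
    · exact hδlprop x hxJ (by
        have := min_le_left δl δr
        linarith)
    · exact hδrprop x hxJ (by
        have := min_le_right δl δr
        linarith)
  -- epsilon argument
  rw [Metric.continuousWithinAt_iff]
  intro ε hε
  -- continuity of f ∘ ofReal on the compact interval
  have hcomp : ContinuousOn (fun t : ℝ => f t) (Set.Icc a' b') :=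
    hf.comp Complex.continuous_ofReal.continuousOn fun t ht => ⟨t, hKJ ht, rfl⟩
  obtain ⟨p, hp⟩ := exists_polynomial_near_of_continuousOn a' b' (fun t => (f t).re)
    (Complex.continuous_re.comp_continuousOn hcomp) (ε / 6) (by positivity)
  obtain ⟨q, hq⟩ := exists_polynomial_near_of_continuousOn a' b' (fun t => (f t).im)
    (Complex.continuous_im.comp_continuousOn hcomp) (ε / 6) (by positivity)
  set r : Polynomial ℂ := p.map (algebraMap ℝ ℂ) + Polynomial.C Complex.I * q.map (algebraMap ℝ ℂ)
    with hr_def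
  have hr_eval : ∀ t : ℝ, r.eval (t : ℂ) = (p.eval t : ℝ) + Complex.I * (q.eval t : ℝ) := by
    intro t
    have hpe : (p.map (algebraMap ℝ ℂ)).eval (t : ℂ) = ((p.eval t : ℝ) : ℂ) := by
      rw [Polynomial.eval_map, ← halg t, Polynomial.eval₂_at_apply, halg]
    have hqe : (q.map (algebraMap ℝ ℂ)).eval (t : ℂ) = ((q.eval t : ℝ) : ℂ) := by
      rw [Polynomial.eval_map, ← halg t, Polynomial.eval₂_at_apply, halg]
    simp [hr_def, hpe, hqe]
  -- pointwise bound
  have hfr : ∀ t ∈ Set.Icc a' b', ‖f t - r.eval (t : ℂ)‖ ≤ ε / 3 := by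
    intro t ht
    have h1 := hp t ht
    have h2 := hq t ht
    have hre : (f t - r.eval (t : ℂ)).re = (f ↑t).re - p.eval t := by
      simp [hr_eval t]
    have him : (f t - r.eval (t : ℂ)).im = (f ↑t).im - q.eval t := by
      simp [hr_eval t]
    calc ‖f ↑t - r.eval (t : ℂ)‖
        ≤ |(f ↑t - r.eval (t : ℂ)).re| + |(f ↑t - r.eval (t : ℂ)).im| :=
          Complex.norm_le_abs_re_add_abs_im _
      _ ≤ ε / 6 + ε / 6 := by
          rw [hre, him]
          have h1' : |(f ↑t).re - p.eval t| < ε / 6 := by rw [abs_sub_comm]; exact h1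
          have h2' : |(f ↑t).im - q.eval t| < ε / 6 := by rw [abs_sub_comm]; exact h2
          exact add_le_add h1'.le h2'.le
      _ = ε / 3 := by ring
  -- cfc f A close to aeval A r for A with spectrum in the box
  have hclose : ∀ A : H →L[ℂ] H, IsSelfAdjoint A → spectrum ℝ A ⊆ Set.Icc a' b' →
      ‖cfc f A - Polynomial.aeval A r‖ ≤ ε / 3 := by
    intro A hAsa hAK
    have := hAsa.isStarNormal
    have hspecC : spectrum ℂ A ⊆ Complex.ofReal '' Set.Icc a' b' := by
      rw [← hAsa.spectrumRestricts.algebraMap_image]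
      exact Set.image_mono hAK
    have hfA : ContinuousOn f (spectrum ℂ A) :=
      hf.mono <| hspecC.trans <| Set.image_mono hKJ
    rw [← cfc_polynomial r A, ← cfc_sub f (fun z => r.eval z) A hfA (by fun_prop)]
    refine norm_cfc_le (by positivity) fun z hz => ?_
    obtain ⟨t, ht, rfl⟩ := hspecC hz
    exact hfr t ht
  -- continuity of polynomial evaluation
  have hpoly : Continuous fun A : H →L[ℂ] H => Polynomial.aeval A r :=
    Polynomial.continuous_aeval r
  obtain ⟨δ₂, hδ₂, hδ₂prop⟩ := Metric.continuousAt_iff.mp hpoly.continuousAt (ε / 3)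
    (by positivity)
  refine ⟨min δ₀ δ₂, lt_min hδ₀ hδ₂, fun A hA hAdist => ?_⟩
  obtain ⟨hAsa, hAspec⟩ := hA
  have hAdist' : ‖A - A₀‖ < δ₀ := by
    rw [← dist_eq_norm]
    exact lt_of_lt_of_le hAdist (min_le_left _ _)
  have hAK : spectrum ℝ A ⊆ Set.Icc a' b' := hspec_in A hAsa hAspec hAdist'
  have hA₀K : spectrum ℝ A₀ ⊆ Set.Icc a' b' := fun μ hμ =>
    ⟨le_trans ha'm (hmem_mM μ hμ).1, le_trans (hmem_mM μ hμ).2 hb'M⟩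
  have hmid : dist (Polynomial.aeval A r) (Polynomial.aeval A₀ r) < ε / 3 :=
    hδ₂prop (lt_of_lt_of_le hAdist (min_le_right _ _))
  calc dist (cfc f A) (cfc f A₀)
      ≤ ‖cfc f A - Polynomial.aeval A r‖ + dist (Polynomial.aeval A r) (Polynomial.aeval A₀ r)
        + ‖Polynomial.aeval A₀ r - cfc f A₀‖ := by
        rw [dist_eq_norm, dist_eq_norm]
        have := norm_sub_le_norm_sub_add_norm_sub (cfc f A) (Polynomial.aeval A r) (cfc f A₀)
        calc ‖cfc f A - cfc f A₀‖
            ≤ ‖cfc f A - Polynomial.aeval A r‖ + ‖Polynomial.aeval A r - cfc f A₀‖ :=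
              norm_sub_le_norm_sub_add_norm_sub _ _ _
          _ ≤ ‖cfc f A - Polynomial.aeval A r‖ + (‖Polynomial.aeval A r - Polynomial.aeval A₀ r‖
              + ‖Polynomial.aeval A₀ r - cfc f A₀‖) := by
              gcongr
              exact norm_sub_le_norm_sub_add_norm_sub _ _ _
          _ = _ := by ring
    _ < ε / 3 + ε / 3 + ε / 3 := by
        have h1 := hclose A hAsa hAK
        have h2 : ‖Polynomial.aeval A₀ r - cfc f A₀‖ ≤ ε / 3 := by
          rw [norm_sub_rev]; exact hclose A₀ hA₀sa hA₀K
        linarith [hmid]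
    _ = ε := by ring
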